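/- arXiv:1806.03597 — 5 statements merged into one kernel-verified Lean document; each statement's English description precedes it below -/
import Mathlib

section
/- Let Λ = (W_j, Λ_j, v_j) be a g-fusion frame for H with frame operator S_Λ, and for I ⊆ J define S_I f = Σ_{j∈I} v_j² π_{W_j} Λ_j* Λ_j π_{W_j} f. Then for all f ∈ H: Σ_{j∈I} v_j² ‖Λ_j π_{W_j} f‖² + ‖S_Λ^{-1/2} S_{Iᶜ} f‖² = Σ_{j∈Iᶜ} v_j² ‖Λ_j π_{W_j} f‖² + ‖S_Λ^{-1/2} S_I f‖². -/
open ContinuousLinearMap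

/-- Orthogonal projection onto a complete subspace, as an operator on the whole space. -/
noncomputable def pProj {H : Type*} [NormedAddCommGroup H] [InnerProductSpace ℂ H]
    (V : Submodule ℂ H) [CompleteSpace V] : H →L[ℂ] H :=
  V.subtypeL ∘L V.orthogonalProjectionOnto

local notation "⟪" x ", " y "⟫" => @inner ℂ _ _ x y

lemma pProj_inner' {H : Type*} [NormedAddCommGroup H] [InnerProductSpace ℂ H]
    (V : Submodule ℂ H) [CompleteSpace V] (x y : H) :
    ⟪pProj V x, y⟫ = ⟪x, pProj V y⟫ := by
  exact Submodule.inner_starProjection_left_eq_right V x y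

set_option maxHeartbeats 1000000 in
theorem stmt12 {H : Type*} [NormedAddCommGroup H] [InnerProductSpace ℂ H] [CompleteSpace H]
    {ι : Type*} {Hs : ι → Type*} [∀ j, NormedAddCommGroup (Hs j)]
    [∀ j, InnerProductSpace ℂ (Hs j)] [∀ j, CompleteSpace (Hs j)]
    (W : ι → Submodule ℂ H) [∀ j, CompleteSpace (W j)]
    (v : ι → ℝ) (hv : ∀ j, 0 < v j)
    (Λ : ∀ j, H →L[ℂ] Hs j) (A B : ℝ) (hA : 0 < A) (hAB : A ≤ B)
    (hsum : ∀ f : H, Summable fun j => (v j) ^ 2 * ‖Λ j (pProj (W j) f)‖ ^ 2)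
    (hlow : ∀ f : H, A * ‖f‖ ^ 2 ≤ ∑' j, (v j) ^ 2 * ‖Λ j (pProj (W j) f)‖ ^ 2)
    (hup : ∀ f : H, ∑' j, (v j) ^ 2 * ‖Λ j (pProj (W j) f)‖ ^ 2 ≤ B * ‖f‖ ^ 2)
    (SΛ Sinv : H →L[ℂ] H)
    (hSΛ : ∀ f : H,
      HasSum (fun j => ((v j : ℂ) ^ 2) • pProj (W j) (adjoint (Λ j) (Λ j (pProj (W j) f)))) (SΛ f))
    (hSΛpos : SΛ.IsPositive)
    (hinv₁ : Sinv ∘L SΛ = 1) (hinv₂ : SΛ ∘L Sinv = 1)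
    (R : H →L[ℂ] H) (hR : R.IsPositive) (hRR : R ∘L R = Sinv)
    (I : Set ι) (SI SIc : H →L[ℂ] H)
    (hSI : ∀ f : H,
      HasSum (fun j : I => ((v j : ℂ) ^ 2) •
        pProj (W j) (adjoint (Λ j) (Λ j (pProj (W j) f)))) (SI f))
    (hSIc : ∀ f : H,
      HasSum (fun j : ↥Iᶜ => ((v j : ℂ) ^ 2) •
        pProj (W j) (adjoint (Λ j) (Λ j (pProj (W j) f)))) (SIc f)) :
    ∀ f : H,
      (∑' j : I, (v j) ^ 2 * ‖Λ j (pProj (W j) f)‖ ^ 2) + ‖R (SIc f)‖ ^ 2 =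
        (∑' j : ↥Iᶜ, (v j) ^ 2 * ‖Λ j (pProj (W j) f)‖ ^ 2) + ‖R (SI f)‖ ^ 2 := by
  intro f
  have hSinv_sa : adjoint Sinv = Sinv := by
    rw [← hRR, adjoint_comp, hR.isSelfAdjoint.adjoint_eq]
  have term_eq : ∀ j : ι,
      ⟪f, ((v j : ℂ) ^ 2) • pProj (W j) (adjoint (Λ j) (Λ j (pProj (W j) f)))⟫ =
        (((v j) ^ 2 * ‖Λ j (pProj (W j) f)‖ ^ 2 : ℝ) : ℂ) := by
    intro j
    rw [inner_smul_right, ← pProj_inner', adjoint_inner_right, inner_self_eq_norm_sq_to_K]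
    simp [RCLike.ofReal_mul]
  -- tsum over I
  have hreI : HasSum (fun j : I => (v j : ℝ) ^ 2 * ‖Λ j (pProj (W j) f)‖ ^ 2)
      (⟪f, SI f⟫.re) := by
    have h1 := (innerSL ℂ f).hasSum (hSI f)
    have h2 : (fun j : I => innerSL ℂ f (((v (j:ι) : ℂ) ^ 2) •
        pProj (W j) (adjoint (Λ j) (Λ j (pProj (W j) f))))) =
        fun j : I => (((v (j:ι)) ^ 2 * ‖Λ j (pProj (W j) f)‖ ^ 2 : ℝ) : ℂ) := by
      funext j; exact term_eq j
    rw [h2] at h1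
    have h3 := Complex.reCLM.hasSum h1
    simpa only [Complex.reCLM_apply, Complex.ofReal_re, innerSL_apply_apply] using h3
  have hreIc : HasSum (fun j : ↥Iᶜ => (v j : ℝ) ^ 2 * ‖Λ j (pProj (W j) f)‖ ^ 2)
      (⟪f, SIc f⟫.re) := by
    have h1 := (innerSL ℂ f).hasSum (hSIc f)
    have h2 : (fun j : ↥Iᶜ => innerSL ℂ f (((v (j:ι) : ℂ) ^ 2) •
        pProj (W j) (adjoint (Λ j) (Λ j (pProj (W j) f))))) =
        fun j : ↥Iᶜ => (((v (j:ι)) ^ 2 * ‖Λ j (pProj (W j) f)‖ ^ 2 : ℝ) : ℂ) := by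
      funext j; exact term_eq j
    rw [h2] at h1
    have h3 := Complex.reCLM.hasSum h1
    simpa only [Complex.reCLM_apply, Complex.ofReal_re, innerSL_apply_apply] using h3
  rw [hreI.tsum_eq, hreIc.tsum_eq]
  -- norms
  have hnorm : ∀ w : H, ‖R w‖ ^ 2 = (⟪w, Sinv w⟫).re := by
    intro w
    have h1 : ⟪w, Sinv w⟫ = ⟪R w, R w⟫ := by
      rw [← hRR]
      have : (R ∘L R) w = R (R w) := rfl
      rw [this, ← adjoint_inner_right, hR.isSelfAdjoint.adjoint_eq]
    rw [h1, inner_self_eq_norm_sq_to_K]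
    norm_cast
  rw [hnorm, hnorm]
  set u := SI f with hu
  set w := SIc f with hwdef
  have hsum' : u + w = SΛ f := by
    have h := HasSum.add_compl (s := I)
      (f := fun j : ι => ((v j : ℂ) ^ 2) •
        pProj (W j) (adjoint (Λ j) (Λ j (pProj (W j) f))))
      (hSI f) (hSIc f)
    exact h.unique (hSΛ f)
  have hfix : Sinv (SΛ f) = f := by
    have := ContinuousLinearMap.ext_iff.mp hinv₁ f
    simpa using this
  have hw : w = SΛ f - u := by rw [← hsum']; abel
  have hSinv_w : Sinv w = f - Sinv u := by rw [hw, map_sub, hfix]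
  have hcross : ⟪SΛ f, Sinv u⟫ = ⟪f, u⟫ := by
    rw [← hSinv_sa, adjoint_inner_right, hfix]
  have hww : ⟪w, Sinv w⟫ = ⟪SΛ f, f⟫ - ⟪f, u⟫ - ⟪u, f⟫ + ⟪u, Sinv u⟫ := by
    rw [hSinv_w, hw, inner_sub_left, inner_sub_right, inner_sub_right, hcross]
    ring
  have hfw : ⟪f, w⟫ = ⟪f, SΛ f⟫ - ⟪f, u⟫ := by rw [hw, inner_sub_right]
  have e1 : (⟪u, f⟫).re = (⟪f, u⟫).re := by
    rw [← inner_conj_symm f u, Complex.conj_re]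
  have e2 : (⟪f, SΛ f⟫).re = (⟪SΛ f, f⟫).re := by
    rw [← inner_conj_symm (SΛ f) f, Complex.conj_re]
  rw [hww, hfw]
  simp only [Complex.add_re, Complex.sub_re]
  linarith
end

section
/- Let Λ be a g-fusion frame for H with frame operator S_Λ and partial sum operators S_I (I ⊆ J) as above. Then 0 ≤ S_I − S_I S_Λ⁻¹ S_I ≤ (1/4) S_Λ in the operator order. -/
open ContinuousLinearMap

theorem stmt13 {H : Type*} [NormedAddCommGroup H] [InnerProductSpace ℂ H] [CompleteSpace H]
    {ι : Type*} {Hs : ι → Type*} [∀ j, NormedAddCommGroup (Hs j)]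
    [∀ j, InnerProductSpace ℂ (Hs j)] [∀ j, CompleteSpace (Hs j)]
    (W : ι → Submodule ℂ H) [∀ j, CompleteSpace (W j)]
    (v : ι → ℝ) (hv : ∀ j, 0 < v j)
    (Λ : ∀ j, H →L[ℂ] Hs j) (A B : ℝ) (hA : 0 < A) (hAB : A ≤ B)
    (hsum : ∀ f : H, Summable fun j => (v j) ^ 2 * ‖Λ j (pProj (W j) f)‖ ^ 2)
    (hlow : ∀ f : H, A * ‖f‖ ^ 2 ≤ ∑' j, (v j) ^ 2 * ‖Λ j (pProj (W j) f)‖ ^ 2)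
    (hup : ∀ f : H, ∑' j, (v j) ^ 2 * ‖Λ j (pProj (W j) f)‖ ^ 2 ≤ B * ‖f‖ ^ 2)
    (SΛ Sinv : H →L[ℂ] H)
    (hSΛ : ∀ f : H,
      HasSum (fun j => ((v j : ℂ) ^ 2) • pProj (W j) (adjoint (Λ j) (Λ j (pProj (W j) f)))) (SΛ f))
    (hSΛpos : SΛ.IsPositive)
    (hinv₁ : Sinv ∘L SΛ = 1) (hinv₂ : SΛ ∘L Sinv = 1)
    (I : Set ι) (SI : H →L[ℂ] H)
    (hSI : ∀ f : H,
      HasSum (fun j : I => ((v j : ℂ) ^ 2) •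
        pProj (W j) (adjoint (Λ j) (Λ j (pProj (W j) f)))) (SI f)) :
    (SI - (SI ∘L Sinv) ∘L SI).IsPositive ∧
      ((1 / 4 : ℂ) • SΛ - (SI - (SI ∘L Sinv) ∘L SI)).IsPositive := by
  classical
  set g : H → ι → ℝ := fun f j => (v j) ^ 2 * ‖Λ j (pProj (W j) f)‖ ^ 2 with hg
  set P : H → ℝ := fun f => ∑' j : I, g f j with hP
  set Q : H → ℝ := fun f => ∑' j, g f j with hQ
  have hgnn : ∀ f j, 0 ≤ g f j := fun f j =>
    mul_nonneg (sq_nonneg _) (sq_nonneg _)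
  -- each term of the frame operator sums pairs to a real number against f
  have hterm : ∀ (f : H) (j : ι),
      (inner ℂ f (((v j : ℂ) ^ 2) • pProj (W j) (adjoint (Λ j) (Λ j (pProj (W j) f)))) : ℂ)
        = ((g f j : ℝ) : ℂ) := by
    intro f j
    rw [inner_smul_right]
    have h1 : (inner ℂ f (pProj (W j) (adjoint (Λ j) (Λ j (pProj (W j) f)))) : ℂ)
        = inner ℂ (pProj (W j) f) (adjoint (Λ j) (Λ j (pProj (W j) f))) := by
      simp only [pProj, coe_comp', Function.comp_apply, Submodule.subtypeL_apply]
      exact (Submodule.inner_starProjection_left_eq_right _ _ _).symm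
    rw [h1, adjoint_inner_right, inner_self_eq_norm_sq_to_K]
    simp only [hg]
    norm_cast
    exact (Complex.ofReal_mul _ _).symm
  have hq : ∀ f : H, (inner ℂ f (SΛ f) : ℂ) = ((Q f : ℝ) : ℂ) := by
    intro f
    have h1 : HasSum (fun j =>
        (inner ℂ f (((v j : ℂ) ^ 2) • pProj (W j) (adjoint (Λ j) (Λ j (pProj (W j) f)))) : ℂ))
        (inner ℂ f (SΛ f)) := (innerSL ℂ f).hasSum (hSΛ f)
    have h1' : HasSum (fun j => ((g f j : ℝ) : ℂ)) (inner ℂ f (SΛ f)) := by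
      simpa only [hterm f] using h1
    have h2 : HasSum (fun j => ((g f j : ℝ) : ℂ)) ((Q f : ℝ) : ℂ) :=
      Complex.ofRealCLM.hasSum (hsum f).hasSum
    exact h1'.unique h2
  have hp : ∀ f : H, (inner ℂ f (SI f) : ℂ) = ((P f : ℝ) : ℂ) := by
    intro f
    have h1 : HasSum (fun j : I =>
        (inner ℂ f (((v j : ℂ) ^ 2) • pProj (W j) (adjoint (Λ j) (Λ j (pProj (W j) f)))) : ℂ))
        (inner ℂ f (SI f)) := (innerSL ℂ f).hasSum (hSI f)
    have h1' : HasSum (fun j : I => ((g f j : ℝ) : ℂ)) (inner ℂ f (SI f)) := by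
      simpa only [hterm f] using h1
    have h2 : HasSum (fun j : I => ((g f j : ℝ) : ℂ)) ((P f : ℝ) : ℂ) :=
      Complex.ofRealCLM.hasSum ((hsum f).subtype I).hasSum
    exact h1'.unique h2
  have hP0 : ∀ f, 0 ≤ P f := fun f => tsum_nonneg fun j => hgnn f j
  have hQ0 : ∀ f, 0 ≤ Q f := fun f => tsum_nonneg fun j => hgnn f j
  have hPQ : ∀ f, P f ≤ Q f := fun f =>
    Summable.tsum_subtype_le (g f) I (hgnn f) (hsum f)
  -- self-adjointness facts
  have hSasa : IsSelfAdjoint SΛ := hSΛpos.isSelfAdjoint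
  have hSIsa : IsSelfAdjoint SI := by
    rw [isSelfAdjoint_iff_isSymmetric, LinearMap.isSymmetric_iff_inner_map_self_real]
    intro x
    show (starRingEnd ℂ) (inner ℂ (SI x) x : ℂ) = (inner ℂ (SI x) x : ℂ)
    have h1 : (inner ℂ (SI x) x : ℂ) = (starRingEnd ℂ) (inner ℂ x (SI x)) :=
      (inner_conj_symm _ _).symm
    rw [h1, hp x]
    simp
  have hSinvsa : IsSelfAdjoint Sinv := by
    have h := congrArg (adjoint (E := H) (F := H)) hinv₂
    rw [adjoint_comp, hSasa.adjoint_eq, ContinuousLinearMap.one_def, adjoint_id,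
      ← ContinuousLinearMap.one_def] at h
    rw [isSelfAdjoint_iff']
    calc adjoint Sinv = adjoint Sinv ∘L (SΛ ∘L Sinv) := by rw [hinv₂, ContinuousLinearMap.one_def, ContinuousLinearMap.comp_id]
      _ = (adjoint Sinv ∘L SΛ) ∘L Sinv := by rw [ContinuousLinearMap.comp_assoc]
      _ = Sinv := by rw [h, ContinuousLinearMap.one_def, ContinuousLinearMap.id_comp]
  have hDsa : IsSelfAdjoint (SI - (SI ∘L Sinv) ∘L SI) := by
    have h2 : IsSelfAdjoint ((SI ∘L Sinv) ∘L SI) := by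
      rw [isSelfAdjoint_iff']
      rw [adjoint_comp, adjoint_comp, hSIsa.adjoint_eq, hSinvsa.adjoint_eq,
        ContinuousLinearMap.comp_assoc]
    exact hSIsa.sub h2
  -- symmetry of SI and SΛ as bilinear identities
  have hsymI : ∀ a b : H, (inner ℂ (SI a) b : ℂ) = inner ℂ a (SI b) := fun a b =>
    hSIsa.isSymmetric a b
  have hsymS : ∀ a b : H, (inner ℂ (SΛ a) b : ℂ) = inner ℂ a (SΛ b) := fun a b =>
    hSasa.isSymmetric a b
  -- key pointwise inequalities
  have key : ∀ x : H, 0 ≤ P x - Q (Sinv (SI x)) ∧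
      P x - Q (Sinv (SI x)) ≤ (1 / 4) * Q x := by
    intro x
    set y := Sinv (SI x) with hy
    have hSy : SΛ y = SI x := by
      have : (SΛ ∘L Sinv) (SI x) = (1 : H →L[ℂ] H) (SI x) := by rw [hinv₂]
      simpa using this
    -- inner ℂ y (SI x) = Q y  and  inner ℂ x (SΛ y) = P x
    have e1 : (inner ℂ y (SI x) : ℂ) = ((Q y : ℝ) : ℂ) := by
      have h := hq y
      rw [hSy] at h
      exact h
    have e2 : (inner ℂ x (SΛ y) : ℂ) = ((P x : ℝ) : ℂ) := by rw [hSy]; exact hp x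
    have e3 : (inner ℂ x (SI y) : ℂ) = ((Q y : ℝ) : ℂ) := by
      rw [← inner_conj_symm, hsymI y x, e1, Complex.conj_ofReal]
    have e4 : (inner ℂ y (SΛ x) : ℂ) = ((P x : ℝ) : ℂ) := by
      rw [← inner_conj_symm, hsymS x y, e2, Complex.conj_ofReal]
    -- first expansion: P (x - y) = P x - 2 * Q y + P y
    have exp1 : (P (x - y) : ℝ) = P x - 2 * Q y + P y := by
      have hC : ((P (x - y) : ℝ) : ℂ) = ((P x - 2 * Q y + P y : ℝ) : ℂ) := by
        rw [← hp (x - y)]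
        rw [map_sub, inner_sub_left, inner_sub_right, inner_sub_right]
        rw [hp x, hp y, e1, e3]
        push_cast
        ring
      exact_mod_cast hC
    -- second expansion: Q (y - (1/2)x) = Q y - P x + (1/4) Q x
    have exp2 : (Q (y - (2⁻¹ : ℂ) • x) : ℝ) = Q y - P x + (1 / 4) * Q x := by
      have hC : ((Q (y - (2⁻¹ : ℂ) • x) : ℝ) : ℂ) = ((Q y - P x + (1 / 4) * Q x : ℝ) : ℂ) := by
        rw [← hq (y - (2⁻¹ : ℂ) • x)]
        rw [map_sub, map_smul, inner_sub_left, inner_sub_right, inner_sub_right,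
          inner_smul_left, inner_smul_left, inner_smul_right, inner_smul_right]
        rw [hq y, hq x, e2, e4]
        push_cast
        simp only [map_inv₀, Complex.conj_ofNat]
        ring
      exact_mod_cast hC
    constructor
    · have h1 : 0 ≤ P (x - y) := hP0 _
      have h2 : P y ≤ Q y := hPQ y
      nlinarith [hP0 y]
    · have h1 : 0 ≤ Q (y - (2⁻¹ : ℂ) • x) := hQ0 _
      nlinarith
  -- now conclude positivity
  have hDinner : ∀ x : H, (inner ℂ ((SI - (SI ∘L Sinv) ∘L SI) x) x : ℂ)
      = ((P x - Q (Sinv (SI x)) : ℝ) : ℂ) := by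
    intro x
    have h1 : (inner ℂ (SI x) x : ℂ) = ((P x : ℝ) : ℂ) := by
      rw [hsymI, hp]
    have h2 : (inner ℂ (SI (Sinv (SI x))) x : ℂ) = ((Q (Sinv (SI x)) : ℝ) : ℂ) := by
      have hSy : SΛ (Sinv (SI x)) = SI x := by
        have : (SΛ ∘L Sinv) (SI x) = (1 : H →L[ℂ] H) (SI x) := by rw [hinv₂]
        simpa using this
      have h2' := hq (Sinv (SI x))
      rw [hSy] at h2'
      rw [hsymI]
      exact h2'
    simp only [ContinuousLinearMap.sub_apply, ContinuousLinearMap.comp_apply,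
      inner_sub_left, h1, h2]
    push_cast
    ring
  constructor
  · refine isPositive_def'.mpr ⟨hDsa, fun x => ?_⟩
    rw [reApplyInnerSelf_apply, hDinner x]
    simpa using (key x).1
  · have hsa2 : IsSelfAdjoint ((1 / 4 : ℂ) • SΛ - (SI - (SI ∘L Sinv) ∘L SI)) := by
      refine IsSelfAdjoint.sub (IsSelfAdjoint.smul ?_ hSasa) hDsa
      norm_num [IsSelfAdjoint]
    refine isPositive_def'.mpr ⟨hsa2, fun x => ?_⟩
    rw [reApplyInnerSelf_apply]
    have h3 : (inner ℂ (((1 / 4 : ℂ) • SΛ - (SI - (SI ∘L Sinv) ∘L SI)) x) x : ℂ)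
        = (((1 / 4) * Q x - (P x - Q (Sinv (SI x))) : ℝ) : ℂ) := by
      rw [ContinuousLinearMap.sub_apply, inner_sub_left, hDinner x,
        ContinuousLinearMap.smul_apply, inner_smul_left]
      have h4 : (inner ℂ (SΛ x) x : ℂ) = ((Q x : ℝ) : ℂ) := by rw [hsymS, hq]
      have hc : (starRingEnd ℂ) (1 / 4 : ℂ) = 1 / 4 := by rw [map_div₀, map_one, map_ofNat]
      rw [h4, hc]
      push_cast
      ring
    rw [h3]
    simpa using (key x).2
end

section
/- Let Λ be a g-fusion frame for H with frame operator S_Λ and partial sum operators S_I as above. Then for all f ∈ H: Σ_{j∈I} v_j² ‖Λ_j π_{W_j} f‖² + ‖S_Λ^{-1/2} S_{Iᶜ} f‖² ≥ (3/4) ‖S_Λ⁻¹‖⁻¹ ‖f‖². -/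
open ContinuousLinearMap

theorem pProj_inner_aux {H : Type*} [NormedAddCommGroup H] [InnerProductSpace ℂ H]
    (V : Submodule ℂ H) [CompleteSpace V] (x y : H) :
    (inner ℂ x (pProj V y) : ℂ) = inner ℂ (pProj V x) y := by
  simp only [pProj, coe_comp', Function.comp_apply, Submodule.coe_subtypeL']
  exact (Submodule.inner_starProjection_left_eq_right V x y).symm

theorem term_re_aux {H : Type*} [NormedAddCommGroup H] [InnerProductSpace ℂ H] [CompleteSpace H]
    {Hs : Type*} [NormedAddCommGroup Hs] [InnerProductSpace ℂ Hs] [CompleteSpace Hs]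
    (T : H →L[ℂ] Hs) (c : ℝ) (V : Submodule ℂ H) [CompleteSpace V] (g : H) :
    Complex.re (inner ℂ g (((c:ℂ)^2) • pProj V (adjoint T (T (pProj V g)))) : ℂ)
      = c^2 * ‖T (pProj V g)‖^2 := by
  rw [inner_smul_right, pProj_inner_aux, adjoint_inner_right, inner_self_eq_norm_sq_to_K]
  simp [← Complex.ofReal_pow, ← Complex.ofReal_mul]

theorem arith_aux (a t N m F K : ℝ) (ha0 : 0 ≤ a) (ht0 : 0 ≤ t) (hm0 : 0 ≤ m) (hN0 : 0 ≤ N)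
    (hK0 : 0 ≤ K) (hF0 : 0 ≤ F) (hat : a + t = N) (ht2 : t^2 ≤ N*m) (hFK : F ≤ K*N) :
    3/4 * K⁻¹ * F ≤ a + m := by
  have h34 : 3/4 * N ≤ a + m := by
    rcases eq_or_lt_of_le hN0 with hNz | hNpos
    · nlinarith
    · nlinarith [sq_nonneg (2*t - N)]
  have hKN : K⁻¹ * F ≤ N := by
    rcases eq_or_lt_of_le hK0 with hKz | hKpos
    · rw [← hKz, inv_zero, zero_mul]; exact hN0
    · rw [inv_mul_le_iff₀ hKpos]; linarith
  calc 3/4 * K⁻¹ * F = 3/4 * (K⁻¹ * F) := by ring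
    _ ≤ 3/4 * N := by linarith
    _ ≤ a + m := h34

theorem stmt14 {H : Type*} [NormedAddCommGroup H] [InnerProductSpace ℂ H] [CompleteSpace H]
    {ι : Type*} {Hs : ι → Type*} [∀ j, NormedAddCommGroup (Hs j)]
    [∀ j, InnerProductSpace ℂ (Hs j)] [∀ j, CompleteSpace (Hs j)]
    (W : ι → Submodule ℂ H) [∀ j, CompleteSpace (W j)]
    (v : ι → ℝ) (hv : ∀ j, 0 < v j)
    (Λ : ∀ j, H →L[ℂ] Hs j) (A B : ℝ) (hA : 0 < A) (hAB : A ≤ B)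
    (hsum : ∀ f : H, Summable fun j => (v j) ^ 2 * ‖Λ j (pProj (W j) f)‖ ^ 2)
    (hlow : ∀ f : H, A * ‖f‖ ^ 2 ≤ ∑' j, (v j) ^ 2 * ‖Λ j (pProj (W j) f)‖ ^ 2)
    (hup : ∀ f : H, ∑' j, (v j) ^ 2 * ‖Λ j (pProj (W j) f)‖ ^ 2 ≤ B * ‖f‖ ^ 2)
    (SΛ Sinv : H →L[ℂ] H)
    (hSΛ : ∀ f : H,
      HasSum (fun j => ((v j : ℂ) ^ 2) • pProj (W j) (adjoint (Λ j) (Λ j (pProj (W j) f)))) (SΛ f))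
    (hSΛpos : SΛ.IsPositive)
    (hinv₁ : Sinv ∘L SΛ = 1) (hinv₂ : SΛ ∘L Sinv = 1)
    (R : H →L[ℂ] H) (hR : R.IsPositive) (hRR : R ∘L R = Sinv)
    (I : Set ι) (SIc : H →L[ℂ] H)
    (hSIc : ∀ f : H,
      HasSum (fun j : ↥Iᶜ => ((v j : ℂ) ^ 2) •
        pProj (W j) (adjoint (Λ j) (Λ j (pProj (W j) f)))) (SIc f)) :
    ∀ f : H,
      3 / 4 * ‖Sinv‖⁻¹ * ‖f‖ ^ 2 ≤
        (∑' j : I, (v j) ^ 2 * ‖Λ j (pProj (W j) f)‖ ^ 2) + ‖R (SIc f)‖ ^ 2 := by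
  intro f
  -- operator algebra
  have hRR' : R * R = Sinv := hRR
  have hinv₁' : Sinv * SΛ = 1 := hinv₁
  have hinv₂' : SΛ * Sinv = 1 := hinv₂
  have h1 : R * Sinv = Sinv * R := by rw [← hRR', mul_assoc]
  have hcomm : SΛ * R = R * SΛ := by
    calc SΛ * R = SΛ * R * (Sinv * SΛ) := by rw [hinv₁', mul_one]
      _ = SΛ * (R * Sinv) * SΛ := by noncomm_ring
      _ = SΛ * (Sinv * R) * SΛ := by rw [h1]
      _ = (SΛ * Sinv) * (R * SΛ) := by noncomm_ring
      _ = R * SΛ := by rw [hinv₂', one_mul]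
  have hops : R * (SΛ * R) = 1 := by rw [hcomm, ← mul_assoc, hRR', hinv₁']
  have hRSR : ∀ x : H, R (SΛ (R x)) = x := by
    intro x
    have := congrArg (fun T : H →L[ℂ] H => T x) hops
    simpa using this
  have hRadj : ∀ x y : H, (inner ℂ (R x) y : ℂ) = inner ℂ x (R y) := by
    intro x y
    rw [← hR.isSelfAdjoint.adjoint_eq, adjoint_inner_left, hR.isSelfAdjoint.adjoint_eq]
  -- sum identities
  have hterm : ∀ (g : H) (j : ι),
      Complex.re (inner ℂ g (((v j : ℂ) ^ 2) • pProj (W j) (adjoint (Λ j) (Λ j (pProj (W j) g)))) : ℂ)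
        = (v j)^2 * ‖Λ j (pProj (W j) g)‖^2 := fun g j => term_re_aux (Λ j) (v j) (W j) g
  have hS : HasSum (fun j => (v j)^2 * ‖Λ j (pProj (W j) f)‖^2)
      (Complex.re (inner ℂ f (SΛ f) : ℂ)) := by
    have h2 := Complex.reCLM.hasSum ((innerSL ℂ f).hasSum (hSΛ f))
    simpa only [Complex.reCLM_apply, innerSL_apply_apply, hterm f] using h2
  have hSc : HasSum (fun j : ↥Iᶜ => (v (j:ι))^2 * ‖Λ (j:ι) (pProj (W (j:ι)) f)‖^2)
      (Complex.re (inner ℂ f (SIc f) : ℂ)) := by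
    have h2 := Complex.reCLM.hasSum ((innerSL ℂ f).hasSum (hSIc f))
    simpa only [Complex.reCLM_apply, innerSL_apply_apply, hterm f] using h2
  -- the auxiliary vector h
  have hRh : R (SΛ (R f)) = f := hRSR f
  -- re ⟪f, SΛ f⟫ = ‖h‖²
  have hfh : Complex.re (inner ℂ f (SΛ f) : ℂ) = ‖SΛ (R f)‖^2 := by
    have heq : (inner ℂ f (SΛ f) : ℂ) = inner ℂ (SΛ (R f)) (SΛ (R f)) := by
      calc (inner ℂ f (SΛ f) : ℂ)
          = inner ℂ (R (SΛ (R f))) (SΛ (R (SΛ (R f)))) := by rw [hRh]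
        _ = inner ℂ (SΛ (R f)) (R (SΛ (R (SΛ (R f))))) := hRadj _ _
        _ = inner ℂ (SΛ (R f)) (SΛ (R f)) := by rw [hRSR]
    rw [heq, inner_self_eq_norm_sq_to_K]
    norm_cast
  -- splitting the sum
  have hat : (∑' j : I, (v (j:ι))^2 * ‖Λ (j:ι) (pProj (W (j:ι)) f)‖^2)
      + Complex.re (inner ℂ f (SIc f) : ℂ) = ‖SΛ (R f)‖^2 := by
    have hsplit := Summable.tsum_add_tsum_compl (f := fun j => (v j)^2 * ‖Λ j (pProj (W j) f)‖^2)
      ((hsum f).subtype I) ((hsum f).subtype Iᶜ)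
    rw [hSc.tsum_eq, hS.tsum_eq, hfh] at hsplit
    exact hsplit
  -- t nonneg
  have ht0 : 0 ≤ Complex.re (inner ℂ f (SIc f) : ℂ) :=
    hSc.tsum_eq ▸ tsum_nonneg (fun j => by positivity)
  -- t ≤ ‖h‖ * ‖R (SIc f)‖
  have htle : Complex.re (inner ℂ f (SIc f) : ℂ) ≤ ‖SΛ (R f)‖ * ‖R (SIc f)‖ := by
    have heq : (inner ℂ f (SIc f) : ℂ) = inner ℂ (SΛ (R f)) (R (SIc f)) := by
      rw [← hRadj (SΛ (R f)) (SIc f), hRh]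
    rw [heq]
    calc Complex.re (inner ℂ (SΛ (R f)) (R (SIc f)) : ℂ)
        ≤ ‖(inner ℂ (SΛ (R f)) (R (SIc f)) : ℂ)‖ := by
          exact Complex.re_le_norm _
      _ ≤ ‖SΛ (R f)‖ * ‖R (SIc f)‖ := norm_inner_le_norm _ _
  have ht2 : (Complex.re (inner ℂ f (SIc f) : ℂ))^2 ≤ ‖SΛ (R f)‖^2 * ‖R (SIc f)‖^2 := by
    nlinarith [htle, ht0, mul_nonneg (norm_nonneg (SΛ (R f))) (norm_nonneg (R (SIc f)))]
  -- ‖f‖² ≤ ‖Sinv‖ * ‖h‖²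
  have hFK : ‖f‖^2 ≤ ‖Sinv‖ * ‖SΛ (R f)‖^2 := by
    have hRRh : R (R (SΛ (R f))) = Sinv (SΛ (R f)) := by
      have := congrArg (fun T : H →L[ℂ] H => T (SΛ (R f))) hRR
      simpa using this
    have heq : (inner ℂ f f : ℂ) = inner ℂ (SΛ (R f)) (Sinv (SΛ (R f))) := by
      calc (inner ℂ f f : ℂ) = inner ℂ (R (SΛ (R f))) (R (SΛ (R f))) := by rw [hRh]
        _ = inner ℂ (SΛ (R f)) (R (R (SΛ (R f)))) := hRadj _ _
        _ = inner ℂ (SΛ (R f)) (Sinv (SΛ (R f))) := by rw [hRRh]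
    have h2 : ‖f‖^2 = Complex.re (inner ℂ (SΛ (R f)) (Sinv (SΛ (R f))) : ℂ) := by
      rw [← heq, inner_self_eq_norm_sq_to_K]
      norm_cast
    rw [h2]
    calc Complex.re (inner ℂ (SΛ (R f)) (Sinv (SΛ (R f))) : ℂ)
        ≤ ‖(inner ℂ (SΛ (R f)) (Sinv (SΛ (R f))) : ℂ)‖ := by
          exact Complex.re_le_norm _
      _ ≤ ‖SΛ (R f)‖ * ‖Sinv (SΛ (R f))‖ := norm_inner_le_norm _ _
      _ ≤ ‖SΛ (R f)‖ * (‖Sinv‖ * ‖SΛ (R f)‖) := by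
          gcongr
          exact Sinv.le_opNorm _
      _ = ‖Sinv‖ * ‖SΛ (R f)‖^2 := by ring
  -- conclude
  exact arith_aux _ _ _ _ _ _
    (tsum_nonneg (fun j => by positivity)) ht0 (sq_nonneg _) (sq_nonneg _)
    (norm_nonneg _) (sq_nonneg _) hat ht2 hFK
end

section
/- Let Λ = (W_j, Λ_j, v_j) be a g-fusion frame with frame operator S_Λ. Then for all f ∈ H: ⟨S_Λ⁻¹ f, f⟩ = Σ_{j∈J} v_j² ‖Λ̃_j π_{W̃_j} f‖², where W̃_j = S_Λ⁻¹ W_j and Λ̃_j = Λ_j π_{W_j} S_Λ⁻¹. -/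
open ContinuousLinearMap

theorem stmt18 {H : Type*} [NormedAddCommGroup H] [InnerProductSpace ℂ H] [CompleteSpace H]
    {ι : Type*} {Hs : ι → Type*} [∀ j, NormedAddCommGroup (Hs j)]
    [∀ j, InnerProductSpace ℂ (Hs j)] [∀ j, CompleteSpace (Hs j)]
    (W : ι → Submodule ℂ H) [∀ j, CompleteSpace (W j)]
    (v : ι → ℝ) (hv : ∀ j, 0 < v j)
    (Λ : ∀ j, H →L[ℂ] Hs j) (A B : ℝ) (hA : 0 < A) (hAB : A ≤ B)
    (hsum : ∀ f : H, Summable fun j => (v j) ^ 2 * ‖Λ j (pProj (W j) f)‖ ^ 2)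
    (hlow : ∀ f : H, A * ‖f‖ ^ 2 ≤ ∑' j, (v j) ^ 2 * ‖Λ j (pProj (W j) f)‖ ^ 2)
    (hup : ∀ f : H, ∑' j, (v j) ^ 2 * ‖Λ j (pProj (W j) f)‖ ^ 2 ≤ B * ‖f‖ ^ 2)
    (SΛ Sinv : H →L[ℂ] H)
    (hSΛ : ∀ f : H,
      HasSum (fun j => ((v j : ℂ) ^ 2) • pProj (W j) (adjoint (Λ j) (Λ j (pProj (W j) f)))) (SΛ f))
    (hSΛpos : SΛ.IsPositive)
    (hinv₁ : Sinv ∘L SΛ = 1) (hinv₂ : SΛ ∘L Sinv = 1)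
    (Wd : ι → Submodule ℂ H) [∀ j, CompleteSpace (Wd j)]
    (hWd : ∀ j, Wd j = Submodule.map (Sinv : H →ₗ[ℂ] H) (W j))
    (Λd : ∀ j, H →L[ℂ] Hs j) (hΛd : ∀ j, Λd j = (Λ j ∘L pProj (W j)) ∘L Sinv) :
    ∀ f : H,
      (inner ℂ (Sinv f) f : ℂ) = (∑' j, ((v j) ^ 2 * ‖Λd j (pProj (Wd j) f)‖ ^ 2 : ℝ) : ℝ) := by
  -- self-adjointness of SΛ and Sinv
  have hS_sa : adjoint SΛ = SΛ := hSΛpos.isSelfAdjoint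
  have hSinv_sa : adjoint Sinv = Sinv := by
    have h0 : adjoint (1 : H →L[ℂ] H) = 1 := by rw [← star_eq_adjoint, star_one]
    have h1 : adjoint (Sinv ∘L SΛ) = adjoint (1 : H →L[ℂ] H) := by rw [hinv₁]
    rw [adjoint_comp, hS_sa, h0] at h1
    -- h1 : SΛ ∘L adjoint Sinv = 1
    have h2 := congrArg (fun T => Sinv ∘L T) h1
    simpa [← comp_assoc, hinv₁, one_def] using h2
  have hSinv_inner : ∀ x y : H, (inner ℂ (Sinv x) y : ℂ) = inner ℂ x (Sinv y) := by
    intro x y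
    conv_lhs => rw [← hSinv_sa]
    rw [adjoint_inner_left]
  intro f
  set g := Sinv f with hg
  have hf : SΛ g = f := by
    have := congrArg (fun T => T f) hinv₂
    simpa using this
  -- key: pProj (W j) ∘ Sinv ∘ pProj (Wd j) = pProj (W j) ∘ Sinv on f
  have hproj : ∀ j, pProj (W j) (Sinv (pProj (Wd j) f)) = pProj (W j) g := by
    intro j
    have horth : Sinv (pProj (Wd j) f - f) ∈ (W j)ᗮ := by
      rw [Submodule.mem_orthogonal]
      intro w hw
      have hmem : Sinv w ∈ Wd j := by
        rw [hWd]; exact ⟨w, hw, rfl⟩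
      have hperp : f - pProj (Wd j) f ∈ (Wd j)ᗮ := by
        exact Submodule.sub_starProjection_mem_orthogonal (K := Wd j) f
      have : (inner ℂ w (Sinv (f - pProj (Wd j) f)) : ℂ) = 0 := by
        rw [← hSinv_inner]
        exact (Submodule.mem_orthogonal (Wd j) _).mp hperp (Sinv w) hmem
      calc (inner ℂ w (Sinv (pProj (Wd j) f - f)) : ℂ)
          = - inner ℂ w (Sinv (f - pProj (Wd j) f)) := by
            rw [← inner_neg_neg]
            simp [map_sub, inner_neg_right, neg_sub, inner_sub_right, neg_add_eq_sub]
        _ = 0 := by rw [this, neg_zero]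
    have hzero : pProj (W j) (Sinv (pProj (Wd j) f - f)) = 0 := by
      have h0 := Submodule.orthogonalProjectionOnto_apply_of_mem_orthogonal horth
      simp only [pProj, ContinuousLinearMap.comp_apply] at h0 ⊢
      rw [h0]
      simp
    have := congrArg (fun x => pProj (W j) x + pProj (W j) g)
      (map_sub Sinv (pProj (Wd j) f) f)
    calc pProj (W j) (Sinv (pProj (Wd j) f))
        = pProj (W j) (Sinv (pProj (Wd j) f) - Sinv f) + pProj (W j) g := by
          simp [map_sub, hg]
      _ = pProj (W j) (Sinv (pProj (Wd j) f - f)) + pProj (W j) g := by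
          rw [map_sub Sinv]
      _ = pProj (W j) g := by rw [hzero, zero_add]
  have hterm : ∀ j, ‖Λd j (pProj (Wd j) f)‖ = ‖Λ j (pProj (W j) g)‖ := by
    intro j
    rw [hΛd]
    simp only [ContinuousLinearMap.comp_apply]
    rw [hproj j]
  -- HasSum of inner products
  have hsum1 : HasSum
      (fun j => (innerSL ℂ g) (((v j : ℂ) ^ 2) •
        pProj (W j) (adjoint (Λ j) (Λ j (pProj (W j) g))))) ((innerSL ℂ g) (SΛ g)) :=
    (hSΛ g).mapL (innerSL ℂ g)
  have hterm2 : ∀ j,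
      (innerSL ℂ g) (((v j : ℂ) ^ 2) •
        pProj (W j) (adjoint (Λ j) (Λ j (pProj (W j) g))))
      = (((v j) ^ 2 * ‖Λ j (pProj (W j) g)‖ ^ 2 : ℝ) : ℂ) := by
    intro j
    rw [innerSL_apply_apply, inner_smul_right]
    have hpj : (inner ℂ g (pProj (W j) (adjoint (Λ j) (Λ j (pProj (W j) g)))) : ℂ)
        = inner ℂ (pProj (W j) g) (adjoint (Λ j) (Λ j (pProj (W j) g))) := by
      simp only [pProj, ContinuousLinearMap.comp_apply, Submodule.subtypeL_apply]
      rw [← Submodule.starProjection_apply, ← Submodule.starProjection_apply, ← Submodule.inner_starProjection_left_eq_right]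
    rw [hpj, adjoint_inner_right, inner_self_eq_norm_sq_to_K]
    push_cast
    rfl
  have hsum2 : HasSum (fun j => (((v j) ^ 2 * ‖Λ j (pProj (W j) g)‖ ^ 2 : ℝ) : ℂ))
      ((inner ℂ g (SΛ g)) : ℂ) := by
    have := hsum1
    simp only [hterm2] at this
    simpa [innerSL_apply_apply] using this
  have hsum3 : HasSum (fun j => (((v j) ^ 2 * ‖Λ j (pProj (W j) g)‖ ^ 2 : ℝ) : ℂ))
      (((∑' j, (v j) ^ 2 * ‖Λ j (pProj (W j) g)‖ ^ 2 : ℝ)) : ℂ) :=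
    (hsum g).hasSum.mapL Complex.ofRealCLM
  have hkey : (inner ℂ g (SΛ g) : ℂ)
      = (((∑' j, (v j) ^ 2 * ‖Λ j (pProj (W j) g)‖ ^ 2 : ℝ)) : ℂ) :=
    hsum2.unique hsum3
  have htsum : (∑' j, ((v j) ^ 2 * ‖Λd j (pProj (Wd j) f)‖ ^ 2 : ℝ))
      = ∑' j, (v j) ^ 2 * ‖Λ j (pProj (W j) g)‖ ^ 2 := by
    apply tsum_congr
    intro j
    rw [hterm j]
  rw [htsum, ← hkey, hf]
end

section
/- Let Λ = (W_j, Λ_j, v_j) be a g-fusion frame for H with frame operator S_Λ. Then the family (S_Λ^{-1/2} W_j, Λ_j π_{W_j} S_Λ^{-1/2}, v_j) is a Parseval g-fusion frame, i.e., Σ_{j∈J} v_j² ‖Λ_j π_{W_j} S_Λ^{-1/2} π_{X_j} f‖² = ‖f‖² for all f ∈ H, where X_j = S_Λ^{-1/2} W_j. -/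
open ContinuousLinearMap

theorem stmt19 {H : Type*} [NormedAddCommGroup H] [InnerProductSpace ℂ H] [CompleteSpace H]
    {ι : Type*} {Hs : ι → Type*} [∀ j, NormedAddCommGroup (Hs j)]
    [∀ j, InnerProductSpace ℂ (Hs j)] [∀ j, CompleteSpace (Hs j)]
    (W : ι → Submodule ℂ H) [∀ j, CompleteSpace (W j)]
    (v : ι → ℝ) (hv : ∀ j, 0 < v j)
    (Λ : ∀ j, H →L[ℂ] Hs j) (A B : ℝ) (hA : 0 < A) (hAB : A ≤ B)
    (hsum : ∀ f : H, Summable fun j => (v j) ^ 2 * ‖Λ j (pProj (W j) f)‖ ^ 2)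
    (hlow : ∀ f : H, A * ‖f‖ ^ 2 ≤ ∑' j, (v j) ^ 2 * ‖Λ j (pProj (W j) f)‖ ^ 2)
    (hup : ∀ f : H, ∑' j, (v j) ^ 2 * ‖Λ j (pProj (W j) f)‖ ^ 2 ≤ B * ‖f‖ ^ 2)
    (SΛ Sinv : H →L[ℂ] H)
    (hSΛ : ∀ f : H,
      HasSum (fun j => ((v j : ℂ) ^ 2) • pProj (W j) (adjoint (Λ j) (Λ j (pProj (W j) f)))) (SΛ f))
    (hSΛpos : SΛ.IsPositive)
    (hinv₁ : Sinv ∘L SΛ = 1) (hinv₂ : SΛ ∘L Sinv = 1)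
    (R : H →L[ℂ] H) (hR : R.IsPositive) (hRR : R ∘L R = Sinv)
    (X : ι → Submodule ℂ H) [∀ j, CompleteSpace (X j)]
    (hX : ∀ j, X j = Submodule.map (R : H →ₗ[ℂ] H) (W j)) :
    ∀ f : H,
      HasSum (fun j => (v j) ^ 2 * ‖Λ j (pProj (W j) (R (pProj (X j) f)))‖ ^ 2) (‖f‖ ^ 2) := by
  intro f
  have hRsa : adjoint R = R := hR.isSelfAdjoint.adjoint_eq
  have hcom' : Sinv ∘L R = R ∘L Sinv := by
    rw [← hRR, comp_assoc]
  have hcom : R ∘L SΛ = SΛ ∘L R := by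
    calc R ∘L SΛ = (SΛ ∘L Sinv) ∘L (R ∘L SΛ) := by rw [hinv₂, one_def, id_comp]
    _ = SΛ ∘L ((Sinv ∘L R) ∘L SΛ) := by simp only [comp_assoc]
    _ = SΛ ∘L (R ∘L (Sinv ∘L SΛ)) := by rw [hcom', comp_assoc]
    _ = SΛ ∘L R := by rw [hinv₁, one_def, comp_id]
  have hRSR : R ∘L (SΛ ∘L R) = 1 := by
    rw [← hcom, ← comp_assoc, hRR, hinv₁]
  set g := R f with hg
  have hkey : ∀ j, pProj (W j) (R (pProj (X j) f)) = pProj (W j) g := by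
    intro j
    have h1 : R f - R (pProj (X j) f) ∈ (W j)ᗮ := by
      rw [Submodule.mem_orthogonal']
      intro w hw
      have hsub : f - pProj (X j) f ∈ (X j)ᗮ := Submodule.sub_starProjection_mem_orthogonal (K := X j) f
      have hRw : R w ∈ X j := by
        rw [hX j]; exact ⟨w, hw, rfl⟩
      have : (inner ℂ (R (f - pProj (X j) f)) w : ℂ) = inner ℂ (f - pProj (X j) f) (R w) := by
        conv_lhs => rw [← hRsa]
        rw [adjoint_inner_left]
      rw [map_sub] at this
      rw [this]
      exact inner_eq_zero_symm.mp (hsub (R w) hRw)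
    have h2 : (W j).orthogonalProjectionOnto (R f - R (pProj (X j) f)) = 0 :=
      Submodule.orthogonalProjectionOnto_eq_zero_iff.mpr h1
    have h3 : pProj (W j) (R f) - pProj (W j) (R (pProj (X j) f)) = 0 := by
      rw [← map_sub]
      show (W j).subtypeL ((W j).orthogonalProjectionOnto _) = 0
      rw [h2]; simp
    exact (sub_eq_zero.mp h3).symm
  have hPsa : ∀ j, adjoint (pProj (W j)) = pProj (W j) := fun j =>
    (isSelfAdjoint_starProjection (W j)).adjoint_eq
  have h3 : HasSum
      (fun j => (inner ℂ g (((v j : ℂ) ^ 2) • pProj (W j) (adjoint (Λ j) (Λ j (pProj (W j) g)))) : ℂ))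
      (inner ℂ g (SΛ g) : ℂ) := (hSΛ g).mapL (innerSL ℂ g)
  have hterm : ∀ j,
      (inner ℂ g (((v j : ℂ) ^ 2) • pProj (W j) (adjoint (Λ j) (Λ j (pProj (W j) g)))) : ℂ)
      = (((v j) ^ 2 * ‖Λ j (pProj (W j) g)‖ ^ 2 : ℝ) : ℂ) := by
    intro j
    rw [inner_smul_right]
    have h5 : (inner ℂ g (pProj (W j) (adjoint (Λ j) (Λ j (pProj (W j) g)))) : ℂ)
        = inner ℂ (pProj (W j) g) (adjoint (Λ j) (Λ j (pProj (W j) g))) := by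
      conv_lhs => rw [← hPsa j]
      rw [adjoint_inner_right, hPsa j]
    rw [h5, adjoint_inner_right, inner_self_eq_norm_sq_to_K]
    simp only [RCLike.ofReal_alg, Complex.real_smul, mul_one]
    push_cast
    ring
  have hval : (inner ℂ g (SΛ g) : ℂ) = ((‖f‖ ^ 2 : ℝ) : ℂ) := by
    have h6 : (inner ℂ g (SΛ g) : ℂ) = inner ℂ f (R (SΛ (R f))) := by
      rw [hg]
      conv_lhs => rw [← hRsa]
      rw [adjoint_inner_left, hRsa]
    rw [h6]
    have h4 : R (SΛ (R f)) = f := by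
      have := congrArg (fun T => T f) hRSR
      simpa using this
    rw [h4, inner_self_eq_norm_sq_to_K]
    norm_cast
  rw [hval] at h3
  have h5 : HasSum (fun j => (((v j) ^ 2 * ‖Λ j (pProj (W j) g)‖ ^ 2 : ℝ) : ℂ)) ((‖f‖ ^ 2 : ℝ) : ℂ) := by
    refine h3.congr_fun ?_
    intro j; rw [hterm j]
  have h6 := Complex.hasSum_ofReal.mp h5
  refine h6.congr_fun ?_
  intro j
  rw [hkey j]
end
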